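/- Let Θ and Φ be anti-reflexive binary relations on finite sets N and M respectively, and let f : N → M be an injective map such that for all i, j ∈ N, Θ(i,j) holds if and only if Φ(f(i), f(j)) holds (a full embedding of mixed graphs). Then the map e_i ↦ e_{f(i)} extends uniquely to an injective monoid homomorphism from HK(Θ) into HK(Φ). -/

import Mathlib

open FreeMonoid SimpleGraph

/-- The defining relations of a Hecke-Kiselman monoid associated with the
mixed graph encoded by the binary relation `Θ`. -/
inductive HKRel {ι : Type*} (Θ : ι → ι → Prop) : FreeMonoid ι → FreeMonoid ι → Prop
  | idem (i : ι) : HKRel Θ (of i * of i) (of i)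
  | comm (i j : ι) (h₁ : ¬ Θ i j) (h₂ : ¬ Θ j i) :
      HKRel Θ (of i * of j) (of j * of i)
  | braid (i j : ι) (h₁ : Θ i j) (h₂ : Θ j i) :
      HKRel Θ (of i * of j * of i) (of j * of i * of j)
  | kisel (i j : ι) (h₁ : Θ i j) (h₂ : ¬ Θ j i) :
      HKRel Θ (of i * of j * of i) (of i * of j)
  | kisel' (i j : ι) (h₁ : Θ i j) (h₂ : ¬ Θ j i) :
      HKRel Θ (of j * of i * of j) (of i * of j)

/-- The Hecke-Kiselman monoid of the mixed graph encoded by `Θ`. -/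
abbrev HK {ι : Type*} (Θ : ι → ι → Prop) : Type _ := (conGen (HKRel Θ)).Quotient

/-- The canonical idempotent generators of a Hecke-Kiselman monoid. -/
def HK.gen {ι : Type*} (Θ : ι → ι → Prop) (i : ι) : HK Θ :=
  (conGen (HKRel Θ)).mk' (FreeMonoid.of i)

section HKAux

variable {ι : Type*} {Θ : ι → ι → Prop}

lemma HK.sound {x y : FreeMonoid ι} (h : HKRel Θ x y) :
    (conGen (HKRel Θ)).mk' x = (conGen (HKRel Θ)).mk' y :=
  (Con.eq _).2 (ConGen.Rel.of _ _ h)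

lemma HK.gen_idem (i : ι) : HK.gen Θ i * HK.gen Θ i = HK.gen Θ i := by
  unfold HK.gen
  rw [← map_mul]
  exact HK.sound (HKRel.idem i)

lemma HK.gen_comm {i j : ι} (h₁ : ¬ Θ i j) (h₂ : ¬ Θ j i) :
    HK.gen Θ i * HK.gen Θ j = HK.gen Θ j * HK.gen Θ i := by
  unfold HK.gen
  rw [← map_mul, ← map_mul]
  exact HK.sound (HKRel.comm i j h₁ h₂)

lemma HK.gen_braid {i j : ι} (h₁ : Θ i j) (h₂ : Θ j i) :
    HK.gen Θ i * HK.gen Θ j * HK.gen Θ i = HK.gen Θ j * HK.gen Θ i * HK.gen Θ j := by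
  unfold HK.gen
  rw [← map_mul, ← map_mul, ← map_mul, ← map_mul]
  exact HK.sound (HKRel.braid i j h₁ h₂)

lemma HK.gen_kisel {i j : ι} (h₁ : Θ i j) (h₂ : ¬ Θ j i) :
    HK.gen Θ i * HK.gen Θ j * HK.gen Θ i = HK.gen Θ i * HK.gen Θ j := by
  unfold HK.gen
  rw [← map_mul, ← map_mul]
  exact HK.sound (HKRel.kisel i j h₁ h₂)

lemma HK.gen_kisel' {i j : ι} (h₁ : Θ i j) (h₂ : ¬ Θ j i) :
    HK.gen Θ j * HK.gen Θ i * HK.gen Θ j = HK.gen Θ i * HK.gen Θ j := by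
  unfold HK.gen
  rw [← map_mul, ← map_mul, ← map_mul]
  exact HK.sound (HKRel.kisel' i j h₁ h₂)

/-- Two monoid homomorphisms out of a Hecke–Kiselman monoid agreeing on generators
are equal. -/
lemma HK.hom_ext {P : Type*} [Monoid P] {ψ₁ ψ₂ : HK Θ →* P}
    (h : ∀ i, ψ₁ (HK.gen Θ i) = ψ₂ (HK.gen Θ i)) : ψ₁ = ψ₂ := by
  have key : ψ₁.comp (conGen (HKRel Θ)).mk' = ψ₂.comp (conGen (HKRel Θ)).mk' :=
    FreeMonoid.hom_eq h
  ext x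
  exact DFunLike.congr_fun key (FreeMonoid.of x)

end HKAux

/-- If `f` is a full embedding of the mixed graph of `Θ` into the
mixed graph of `Φ`, then `e i ↦ e (f i)` extends uniquely to a monoid homomorphism
`HK(Θ) → HK(Φ)`, and this homomorphism is injective. -/
theorem heckeKiselman_canonical_injection {N M : Type*} [Finite N] [Finite M]
    (Θ : N → N → Prop) (hΘ : ∀ i, ¬ Θ i i)
    (Φ : M → M → Prop) (hΦ : ∀ i, ¬ Φ i i)
    (f : N → M) (hf : Function.Injective f)
    (hfull : ∀ i j, Θ i j ↔ Φ (f i) (f j)) :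
    ∃ φ : HK Θ →* HK Φ,
      (∀ i, φ (HK.gen Θ i) = HK.gen Φ (f i)) ∧
      Function.Injective φ ∧
      ∀ ψ : HK Θ →* HK Φ, (∀ i, ψ (HK.gen Θ i) = HK.gen Φ (f i)) → ψ = φ := by
  classical
  -- The forward homomorphism.
  set Fφ : FreeMonoid N →* HK Φ := FreeMonoid.lift fun i => HK.gen Φ (f i) with hFφ
  have hφrel : conGen (HKRel Θ) ≤ Con.ker Fφ := by
    apply Con.conGen_le.2
    rintro x y (⟨i⟩ | ⟨i, j, h₁, h₂⟩ | ⟨i, j, h₁, h₂⟩ | ⟨i, j, h₁, h₂⟩ | ⟨i, j, h₁, h₂⟩) <;>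
      simp only [Con.ker_rel, map_mul, hFφ, FreeMonoid.lift_eval_of]
    · exact HK.gen_idem _
    · exact HK.gen_comm (fun h => h₁ ((hfull i j).2 h)) (fun h => h₂ ((hfull j i).2 h))
    · exact HK.gen_braid ((hfull i j).1 h₁) ((hfull j i).1 h₂)
    · exact HK.gen_kisel ((hfull i j).1 h₁) (fun h => h₂ ((hfull j i).2 h))
    · exact HK.gen_kisel' ((hfull i j).1 h₁) (fun h => h₂ ((hfull j i).2 h))
  set φ : HK Θ →* HK Φ := Con.lift _ Fφ hφrel with hφdef
  have hφgen : ∀ i, φ (HK.gen Θ i) = HK.gen Φ (f i) := by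
    intro i
    show φ ((conGen (HKRel Θ)).mk' (FreeMonoid.of i)) = _
    rw [hφdef, Con.lift_mk', hFφ, FreeMonoid.lift_eval_of]
  -- The retraction.
  set g : M → HK Θ := fun m => if h : ∃ i, f i = m then HK.gen Θ h.choose else 1 with hgdef
  have hg : ∀ i, g (f i) = HK.gen Θ i := by
    intro i
    have h : ∃ j, f j = f i := ⟨i, rfl⟩
    rw [hgdef]
    simp only [dif_pos h]
    rw [hf h.choose_spec]
  have hgout : ∀ m, (¬ ∃ i, f i = m) → g m = 1 := fun m hm => dif_neg hm
  set Fr : FreeMonoid M →* HK Θ := FreeMonoid.lift g with hFr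
  have hrrel : conGen (HKRel Φ) ≤ Con.ker Fr := by
    apply Con.conGen_le.2
    rintro x y (⟨a⟩ | ⟨a, b, h₁, h₂⟩ | ⟨a, b, h₁, h₂⟩ | ⟨a, b, h₁, h₂⟩ | ⟨a, b, h₁, h₂⟩) <;>
        simp only [Con.ker_rel, map_mul, hFr, FreeMonoid.lift_eval_of] <;>
        [skip; skip; skip; skip; skip]
    · by_cases ha : ∃ i, f i = a
      · obtain ⟨i, rfl⟩ := ha
        rw [hg]; exact HK.gen_idem i
      · rw [hgout a ha, one_mul]
    · by_cases ha : ∃ i, f i = a <;> by_cases hb : ∃ j, f j = b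
      · obtain ⟨i, rfl⟩ := ha; obtain ⟨j, rfl⟩ := hb
        rw [hg, hg]
        exact HK.gen_comm (fun h => h₁ ((hfull i j).1 h)) (fun h => h₂ ((hfull j i).1 h))
      · rw [hgout b hb, one_mul, mul_one]
      · rw [hgout a ha, one_mul, mul_one]
      · rw [hgout a ha, hgout b hb]
    · by_cases ha : ∃ i, f i = a <;> by_cases hb : ∃ j, f j = b
      · obtain ⟨i, rfl⟩ := ha; obtain ⟨j, rfl⟩ := hb
        rw [hg, hg]
        exact HK.gen_braid ((hfull i j).2 h₁) ((hfull j i).2 h₂)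
      · obtain ⟨i, rfl⟩ := ha
        simp only [hg, hgout b hb, one_mul, mul_one]
        exact HK.gen_idem i
      · obtain ⟨j, rfl⟩ := hb
        simp only [hg, hgout a ha, one_mul, mul_one]
        exact (HK.gen_idem j).symm
      · rw [hgout a ha, hgout b hb, one_mul, one_mul]
    · by_cases ha : ∃ i, f i = a <;> by_cases hb : ∃ j, f j = b
      · obtain ⟨i, rfl⟩ := ha; obtain ⟨j, rfl⟩ := hb
        rw [hg, hg]
        exact HK.gen_kisel ((hfull i j).2 h₁) (fun h => h₂ ((hfull j i).1 h))
      · obtain ⟨i, rfl⟩ := ha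
        simp only [hg, hgout b hb, one_mul, mul_one]
        exact HK.gen_idem i
      · obtain ⟨j, rfl⟩ := hb
        simp only [hg, hgout a ha, one_mul, mul_one]
      · rw [hgout a ha, hgout b hb, one_mul, one_mul]
    · by_cases ha : ∃ i, f i = a <;> by_cases hb : ∃ j, f j = b
      · obtain ⟨i, rfl⟩ := ha; obtain ⟨j, rfl⟩ := hb
        rw [hg, hg]
        exact HK.gen_kisel' ((hfull i j).2 h₁) (fun h => h₂ ((hfull j i).1 h))
      · obtain ⟨i, rfl⟩ := ha
        simp only [hg, hgout b hb, one_mul, mul_one]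
      · obtain ⟨j, rfl⟩ := hb
        simp only [hg, hgout a ha, one_mul, mul_one]
        exact HK.gen_idem j
      · rw [hgout a ha, hgout b hb, one_mul, one_mul]
  set r : HK Φ →* HK Θ := Con.lift _ Fr hrrel with hrdef
  have hrgen : ∀ m, r (HK.gen Φ m) = g m := by
    intro m
    show r ((conGen (HKRel Φ)).mk' (FreeMonoid.of m)) = _
    rw [hrdef, Con.lift_mk', hFr, FreeMonoid.lift_eval_of]
  have hretr : r.comp φ = MonoidHom.id (HK Θ) := by
    apply HK.hom_ext
    intro i
    simp only [MonoidHom.comp_apply, MonoidHom.id_apply, hφgen, hrgen, hg]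
  refine ⟨φ, hφgen, ?_, ?_⟩
  · intro x y hxy
    have hx := DFunLike.congr_fun hretr x
    have hy := DFunLike.congr_fun hretr y
    simp only [MonoidHom.comp_apply, MonoidHom.id_apply] at hx hy
    rw [← hx, ← hy, hxy]
  · intro ψ hψ
    exact HK.hom_ext fun i => (hψ i).trans (hφgen i).symm
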